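/- Fix C ∈ S₂(H₁ ⊗ H₂) and a nonzero C₁ ∈ S₂(H₁). Then over all C₂ ∈ S₂(H₂), the distance ‖C − C₁ ⊗̃ C₂‖₂ is minimized at C̃₂ = T₁(C, C₁)/‖C₁‖₂², i.e. ‖C − C₁ ⊗̃ C₂‖₂² ≥ ‖C − C₁ ⊗̃ C̃₂‖₂² for all C₂ ∈ S₂(H₂). -/

import Mathlib

open scoped InnerProductSpace
noncomputable section

/-- Hilbert–Schmidt inner product of two operators with respect to a Hilbert basis. -/
def hsInner {ι E : Type*} [NormedAddCommGroup E] [InnerProductSpace ℝ E]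
    (b : HilbertBasis ι ℝ E) (A B : E →L[ℝ] E) : ℝ :=
  ∑' i, ⟪A (b i), B (b i)⟫_ℝ

/-- Hilbert–Schmidt norm. -/
def hsNorm {ι E : Type*} [NormedAddCommGroup E] [InnerProductSpace ℝ E]
    (b : HilbertBasis ι ℝ E) (A : E →L[ℝ] E) : ℝ :=
  Real.sqrt (hsInner b A A)

/-- Being a Hilbert–Schmidt operator. -/
def IsHS {ι E : Type*} [NormedAddCommGroup E] [InnerProductSpace ℝ E]
    (b : HilbertBasis ι ℝ E) (A : E →L[ℝ] E) : Prop :=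
  Summable fun i => ‖A (b i)‖ ^ 2

/-- A realization of the Hilbert space `H` as the Hilbert tensor product `H₁ ⊗ H₂`,
together with the operator tensor product `⊗̃`: `tmul` is bilinear with
`⟪u ⊗ v, w ⊗ z⟫ = ⟪u,w⟫⟪v,z⟫`, elementary tensors span a dense subspace, and
`otimes C₁ C₂` is the bounded operator with `(C₁ ⊗̃ C₂)(u ⊗ v) = C₁ u ⊗ C₂ v`. -/
structure HilbertTensorProduct (H₁ H₂ H : Type*) [NormedAddCommGroup H₁]
    [InnerProductSpace ℝ H₁] [NormedAddCommGroup H₂] [InnerProductSpace ℝ H₂]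
    [NormedAddCommGroup H] [InnerProductSpace ℝ H] : Type _ where
  tmul : H₁ →ₗ[ℝ] H₂ →ₗ[ℝ] H
  inner_tmul : ∀ (u w : H₁) (v z : H₂),
    ⟪tmul u v, tmul w z⟫_ℝ = ⟪u, w⟫_ℝ * ⟪v, z⟫_ℝ
  dense_span : (Submodule.span ℝ
    (Set.range fun p : H₁ × H₂ => tmul p.1 p.2)).topologicalClosure = ⊤
  otimes : (H₁ →L[ℝ] H₁) → (H₂ →L[ℝ] H₂) → (H →L[ℝ] H)
  otimes_tmul : ∀ (C₁ : H₁ →L[ℝ] H₁) (C₂ : H₂ →L[ℝ] H₂) (u : H₁) (v : H₂),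
    otimes C₁ C₂ (tmul u v) = tmul (C₁ u) (C₂ v)

variable {ι₁ ι₂ κ H₁ H₂ H : Type*}
variable [NormedAddCommGroup H₁] [InnerProductSpace ℝ H₁] [CompleteSpace H₁]
variable [NormedAddCommGroup H₂] [InnerProductSpace ℝ H₂] [CompleteSpace H₂]
variable [NormedAddCommGroup H] [InnerProductSpace ℝ H] [CompleteSpace H]

/-- `T₁` is the partial-trace type map `S₂(H₁ ⊗ H₂) × S₂(H₁) → S₂(H₂)` determined by
`T₁(A ⊗̃ B, C₁) = ⟨A, C₁⟩ B`; it is characterized by mapping Hilbert–Schmidt operators to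
Hilbert–Schmidt operators and the duality identity `⟨B, T₁(C,C₁)⟩ = ⟨C, C₁ ⊗̃ B⟩`. -/
def IsT1 {ι₁ ι₂ κ H₁ H₂ H : Type*}
    [NormedAddCommGroup H₁] [InnerProductSpace ℝ H₁]
    [NormedAddCommGroup H₂] [InnerProductSpace ℝ H₂]
    [NormedAddCommGroup H] [InnerProductSpace ℝ H]
    (P : HilbertTensorProduct H₁ H₂ H)
    (b₁ : HilbertBasis ι₁ ℝ H₁) (b₂ : HilbertBasis ι₂ ℝ H₂) (b : HilbertBasis κ ℝ H)
    (T₁ : (H →L[ℝ] H) → (H₁ →L[ℝ] H₁) → (H₂ →L[ℝ] H₂)) : Prop :=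
  (∀ C C₁, IsHS b C → IsHS b₁ C₁ → IsHS b₂ (T₁ C C₁)) ∧
  (∀ C C₁ B, IsHS b C → IsHS b₁ C₁ → IsHS b₂ B →
      hsInner b₂ B (T₁ C C₁) = hsInner b C (P.otimes C₁ B))

/-- `T₂` is the map `S₂(H₁ ⊗ H₂) × S₂(H₂) → S₂(H₁)` determined by
`T₂(A ⊗̃ B, C₂) = ⟨B, C₂⟩ A`; characterized by `⟨A, T₂(C,C₂)⟩ = ⟨C, A ⊗̃ C₂⟩`. -/
def IsT2 {ι₁ ι₂ κ H₁ H₂ H : Type*}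
    [NormedAddCommGroup H₁] [InnerProductSpace ℝ H₁]
    [NormedAddCommGroup H₂] [InnerProductSpace ℝ H₂]
    [NormedAddCommGroup H] [InnerProductSpace ℝ H]
    (P : HilbertTensorProduct H₁ H₂ H)
    (b₁ : HilbertBasis ι₁ ℝ H₁) (b₂ : HilbertBasis ι₂ ℝ H₂) (b : HilbertBasis κ ℝ H)
    (T₂ : (H →L[ℝ] H) → (H₂ →L[ℝ] H₂) → (H₁ →L[ℝ] H₁)) : Prop :=
  (∀ C C₂, IsHS b C → IsHS b₂ C₂ → IsHS b₁ (T₂ C C₂)) ∧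
  (∀ C C₂ A, IsHS b C → IsHS b₂ C₂ → IsHS b₁ A →
      hsInner b₁ A (T₂ C C₂) = hsInner b C (P.otimes A C₂))

section AuxLemmas

open scoped ENNReal

variable {ι ι' E : Type*} [NormedAddCommGroup E] [InnerProductSpace ℝ E]

lemma hsInner_self_nonneg (b : HilbertBasis ι ℝ E) (A : E →L[ℝ] E) : 0 ≤ hsInner b A A :=
  tsum_nonneg fun _ => real_inner_self_nonneg

lemma hsNorm_sq (b : HilbertBasis ι ℝ E) (A : E →L[ℝ] E) :
    hsNorm b A ^ 2 = hsInner b A A :=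
  Real.sq_sqrt (hsInner_self_nonneg b A)

lemma hsInner_self_eq (b : HilbertBasis ι ℝ E) (A : E →L[ℝ] E) :
    hsInner b A A = ∑' i, ‖A (b i)‖ ^ 2 :=
  tsum_congr fun _ => real_inner_self_eq_norm_sq _

lemma hsInner_comm (b : HilbertBasis ι ℝ E) (A B : E →L[ℝ] E) :
    hsInner b A B = hsInner b B A :=
  tsum_congr fun _ => real_inner_comm _ _

lemma IsHS.summable_inner {b : HilbertBasis ι ℝ E} {A B : E →L[ℝ] E}
    (hA : IsHS b A) (hB : IsHS b B) :
    Summable fun i => ⟪A (b i), B (b i)⟫_ℝ := by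
  refine Summable.of_abs (Summable.of_nonneg_of_le (fun i => abs_nonneg _) (fun i => ?_)
    ((Summable.add hA hB).div_const 2))
  calc |⟪A (b i), B (b i)⟫_ℝ| ≤ ‖A (b i)‖ * ‖B (b i)‖ := abs_real_inner_le_norm _ _
    _ ≤ (‖A (b i)‖ ^ 2 + ‖B (b i)‖ ^ 2) / 2 := by
        nlinarith [sq_nonneg (‖A (b i)‖ - ‖B (b i)‖)]

lemma IsHS.smul {b : HilbertBasis ι ℝ E} {A : E →L[ℝ] E} (hA : IsHS b A) (c : ℝ) :
    IsHS b (c • A) := by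
  have h : (fun i => ‖(c • A) (b i)‖ ^ 2) = fun i => c ^ 2 * ‖A (b i)‖ ^ 2 := by
    ext i
    simp [norm_smul, mul_pow]
  unfold IsHS
  rw [h]
  exact Summable.mul_left _ hA

lemma IsHS.sub {b : HilbertBasis ι ℝ E} {A B : E →L[ℝ] E} (hA : IsHS b A) (hB : IsHS b B) :
    IsHS b (A - B) := by
  refine Summable.of_nonneg_of_le (fun i => sq_nonneg _) (fun i => ?_)
    ((Summable.add hA hB).mul_left 2)
  have h1 : ‖(A - B) (b i)‖ = ‖A (b i) - B (b i)‖ := by simp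
  have h2 := norm_sub_le (A (b i)) (B (b i))
  rw [h1]
  nlinarith [norm_nonneg (A (b i) - B (b i)), norm_nonneg (A (b i)), norm_nonneg (B (b i)),
    sq_nonneg (‖A (b i)‖ - ‖B (b i)‖)]

lemma hsInner_smul_left (b : HilbertBasis ι ℝ E) (A B : E →L[ℝ] E) (c : ℝ) :
    hsInner b (c • A) B = c * hsInner b A B := by
  unfold hsInner
  rw [← tsum_mul_left]
  refine tsum_congr fun i => ?_
  have h : (c • A) (b i) = c • (A (b i)) := rfl
  rw [h, real_inner_smul_left]

lemma hsInner_sub_sub (b : HilbertBasis ι ℝ E) {A B : E →L[ℝ] E}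
    (hA : IsHS b A) (hB : IsHS b B) :
    hsInner b (A - B) (A - B)
      = hsInner b A A - 2 * hsInner b A B + hsInner b B B := by
  have sAA := IsHS.summable_inner hA hA
  have sAB := IsHS.summable_inner hA hB
  have sBB := IsHS.summable_inner hB hB
  unfold hsInner
  have h1 : (fun i => ⟪(A - B) (b i), (A - B) (b i)⟫_ℝ)
      = fun i => (⟪A (b i), A (b i)⟫_ℝ - 2 * ⟪A (b i), B (b i)⟫_ℝ) + ⟪B (b i), B (b i)⟫_ℝ := by
    ext i
    have h : (A - B) (b i) = A (b i) - B (b i) := by simp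
    rw [h, real_inner_sub_sub_self]
  rw [h1, Summable.tsum_add (sAA.sub (sAB.mul_left 2)) sBB, Summable.tsum_sub sAA (sAB.mul_left 2), tsum_mul_left]

lemma hsInner_self_pos {b : HilbertBasis ι ℝ E} {A : E →L[ℝ] E}
    (hA : IsHS b A) (hne : A ≠ 0) : 0 < hsInner b A A := by
  rcases (hsInner_self_nonneg b A).lt_or_eq with h | h
  · exact h
  · exfalso
    apply hne
    have hz : ∀ i, A (b i) = 0 := by
      intro i
      have h1 : ‖A (b i)‖ ^ 2 ≤ ∑' j, ‖A (b j)‖ ^ 2 := Summable.le_tsum hA i fun j _ => sq_nonneg _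
      rw [← hsInner_self_eq, ← h] at h1
      have h2 : ‖A (b i)‖ = 0 := by nlinarith [sq_nonneg ‖A (b i)‖, norm_nonneg (A (b i))]
      exact norm_eq_zero.mp h2
    have hker : (⊤ : Submodule ℝ E) ≤ LinearMap.ker (A : E →ₗ[ℝ] E) := by
      rw [← b.dense_span]
      refine Submodule.topologicalClosure_minimal _ ?_ ?_
      · rw [Submodule.span_le]
        rintro _ ⟨i, rfl⟩
        exact LinearMap.mem_ker.mpr (hz i)
      · exact ContinuousLinearMap.isClosed_ker A
    exact ContinuousLinearMap.ext fun x => by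
      simpa using LinearMap.mem_ker.mp (hker Submodule.mem_top)

variable [CompleteSpace E]

/-- The Hilbert–Schmidt "norm squared" valued in `ℝ≥0∞`. -/
def shs (b : HilbertBasis ι ℝ E) (A : E →L[ℝ] E) : ℝ≥0∞ :=
  ∑' i, ENNReal.ofReal (‖A (b i)‖ ^ 2)

lemma isHS_iff_shs_ne_top (b : HilbertBasis ι ℝ E) (A : E →L[ℝ] E) :
    IsHS b A ↔ shs b A ≠ ⊤ := by
  have h0 : shs b A = ∑' i, ((‖A (b i)‖ ^ 2).toNNReal : ℝ≥0∞) := rfl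
  rw [h0, ENNReal.tsum_coe_ne_top_iff_summable, ← NNReal.summable_coe]
  have h2 : (fun i => ((‖A (b i)‖ ^ 2).toNNReal : ℝ)) = fun i => ‖A (b i)‖ ^ 2 :=
    funext fun i => Real.coe_toNNReal _ (sq_nonneg _)
  rw [h2]
  exact Iff.rfl

lemma shs_toReal (b : HilbertBasis ι ℝ E) (A : E →L[ℝ] E) :
    (shs b A).toReal = ∑' i, ‖A (b i)‖ ^ 2 := by
  unfold shs
  rw [ENNReal.tsum_toReal_eq fun i => ENNReal.ofReal_ne_top]
  exact tsum_congr fun i => ENNReal.toReal_ofReal (sq_nonneg _)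

lemma tsum_ofReal_inner_sq (b : HilbertBasis ι ℝ E) (x : E) :
    ∑' i, ENNReal.ofReal (⟪x, b i⟫_ℝ * ⟪b i, x⟫_ℝ) = ENNReal.ofReal (‖x‖ ^ 2) := by
  rw [← ENNReal.ofReal_tsum_of_nonneg
      (fun i => by rw [real_inner_comm (b i) x]; exact mul_self_nonneg _)
      (b.summable_inner_mul_inner x x),
    b.tsum_inner_mul_inner, real_inner_self_eq_norm_sq]

lemma shs_adjoint (b : HilbertBasis ι ℝ E) (e : HilbertBasis ι' ℝ E) (A : E →L[ℝ] E) :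
    shs b A = shs e (ContinuousLinearMap.adjoint A) := by
  unfold shs
  calc ∑' i, ENNReal.ofReal (‖A (b i)‖ ^ 2)
      = ∑' i, ∑' j, ENNReal.ofReal (⟪A (b i), e j⟫_ℝ * ⟪e j, A (b i)⟫_ℝ) :=
        tsum_congr fun i => (tsum_ofReal_inner_sq e _).symm
    _ = ∑' j, ∑' i, ENNReal.ofReal (⟪A (b i), e j⟫_ℝ * ⟪e j, A (b i)⟫_ℝ) := ENNReal.tsum_comm
    _ = ∑' j, ENNReal.ofReal (‖(ContinuousLinearMap.adjoint A) (e j)‖ ^ 2) := by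
        refine tsum_congr fun j => ?_
        rw [← tsum_ofReal_inner_sq b ((ContinuousLinearMap.adjoint A) (e j))]
        refine tsum_congr fun i => ?_
        congr 1
        rw [ContinuousLinearMap.adjoint_inner_left, ContinuousLinearMap.adjoint_inner_right]
        ring

lemma shs_basis_indep (b : HilbertBasis ι ℝ E) (e : HilbertBasis ι' ℝ E) (A : E →L[ℝ] E) :
    shs b A = shs e A := by
  rw [shs_adjoint b e A, shs_adjoint e e (ContinuousLinearMap.adjoint A),
    ContinuousLinearMap.adjoint_adjoint]

end AuxLemmas

section TensorAux

lemma HilbertTensorProduct.norm_tmul (P : HilbertTensorProduct H₁ H₂ H) (u : H₁) (v : H₂) :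
    ‖P.tmul u v‖ = ‖u‖ * ‖v‖ := by
  have h := P.inner_tmul u u v v
  rw [real_inner_self_eq_norm_sq, real_inner_self_eq_norm_sq, real_inner_self_eq_norm_sq] at h
  calc ‖P.tmul u v‖ = Real.sqrt (‖P.tmul u v‖ ^ 2) := (Real.sqrt_sq (norm_nonneg _)).symm
    _ = Real.sqrt ((‖u‖ * ‖v‖) ^ 2) := by rw [h, mul_pow]
    _ = ‖u‖ * ‖v‖ := Real.sqrt_sq (by positivity)

/-- The elementary-tensor family indexed by a pair of Hilbert bases. -/
def tensorBasisFun (P : HilbertTensorProduct H₁ H₂ H)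
    (b₁ : HilbertBasis ι₁ ℝ H₁) (b₂ : HilbertBasis ι₂ ℝ H₂) : ι₁ × ι₂ → H :=
  fun p => P.tmul (b₁ p.1) (b₂ p.2)

lemma tensorBasis_orthonormal (P : HilbertTensorProduct H₁ H₂ H)
    (b₁ : HilbertBasis ι₁ ℝ H₁) (b₂ : HilbertBasis ι₂ ℝ H₂) :
    Orthonormal ℝ (tensorBasisFun P b₁ b₂) := by
  classical
  rw [orthonormal_iff_ite]
  intro p q
  have h : ⟪tensorBasisFun P b₁ b₂ p, tensorBasisFun P b₁ b₂ q⟫_ℝ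
      = ⟪b₁ p.1, b₁ q.1⟫_ℝ * ⟪b₂ p.2, b₂ q.2⟫_ℝ := P.inner_tmul _ _ _ _
  rw [h, orthonormal_iff_ite.mp b₁.orthonormal, orthonormal_iff_ite.mp b₂.orthonormal]
  by_cases h1 : p.1 = q.1 <;> by_cases h2 : p.2 = q.2 <;>
    simp [Prod.ext_iff, h1, h2]

lemma tensorBasis_dense (P : HilbertTensorProduct H₁ H₂ H)
    (b₁ : HilbertBasis ι₁ ℝ H₁) (b₂ : HilbertBasis ι₂ ℝ H₂) :
    ⊤ ≤ (Submodule.span ℝ (Set.range (tensorBasisFun P b₁ b₂))).topologicalClosure := by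
  set M := (Submodule.span ℝ (Set.range (tensorBasisFun P b₁ b₂))).topologicalClosure with hMdef
  have hMc : IsClosed (M : Set H) := Submodule.isClosed_topologicalClosure _
  have gen : ∀ p : ι₁ × ι₂, P.tmul (b₁ p.1) (b₂ p.2) ∈ M :=
    fun p => Submodule.le_topologicalClosure _ (Submodule.subset_span ⟨p, rfl⟩)
  have step1 : ∀ (i : ι₁) (v : H₂), P.tmul (b₁ i) v ∈ M := by
    intro i v
    let f : H₂ →L[ℝ] H := LinearMap.mkContinuous (P.tmul (b₁ i)) ‖b₁ i‖
      (fun w => le_of_eq (P.norm_tmul _ _))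
    have hle : Submodule.span ℝ (Set.range ⇑b₂) ≤ M.comap (f : H₂ →ₗ[ℝ] H) := by
      rw [Submodule.span_le]
      rintro _ ⟨j, rfl⟩
      exact gen (i, j)
    have hcl : IsClosed ((M.comap (f : H₂ →ₗ[ℝ] H) : Submodule ℝ H₂) : Set H₂) :=
      hMc.preimage f.continuous
    have htop : (⊤ : Submodule ℝ H₂) ≤ M.comap (f : H₂ →ₗ[ℝ] H) := by
      rw [← b₂.dense_span]
      exact Submodule.topologicalClosure_minimal _ hle hcl
    exact htop Submodule.mem_top
  have step2 : ∀ (v : H₂) (u : H₁), P.tmul u v ∈ M := by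
    intro v u
    let g : H₁ →L[ℝ] H := LinearMap.mkContinuous (P.tmul.flip v) ‖v‖
      (fun w => le_of_eq (by
        have h : P.tmul.flip v w = P.tmul w v := rfl
        rw [h, P.norm_tmul]; ring))
    have hle : Submodule.span ℝ (Set.range ⇑b₁) ≤ M.comap (g : H₁ →ₗ[ℝ] H) := by
      rw [Submodule.span_le]
      rintro _ ⟨i, rfl⟩
      exact step1 i v
    have hcl : IsClosed ((M.comap (g : H₁ →ₗ[ℝ] H) : Submodule ℝ H₁) : Set H₁) :=
      hMc.preimage g.continuous
    have htop : (⊤ : Submodule ℝ H₁) ≤ M.comap (g : H₁ →ₗ[ℝ] H) := by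
      rw [← b₁.dense_span]
      exact Submodule.topologicalClosure_minimal _ hle hcl
    exact htop Submodule.mem_top
  have elem : Submodule.span ℝ (Set.range fun p : H₁ × H₂ => P.tmul p.1 p.2) ≤ M := by
    rw [Submodule.span_le]
    rintro _ ⟨⟨u, v⟩, rfl⟩
    exact step2 v u
  calc (⊤ : Submodule ℝ H) = _ := P.dense_span.symm
    _ ≤ M := Submodule.topologicalClosure_minimal _ elem hMc

/-- The Hilbert basis of `H` consisting of elementary tensors of basis vectors. -/
def tensorBasis (P : HilbertTensorProduct H₁ H₂ H)
    (b₁ : HilbertBasis ι₁ ℝ H₁) (b₂ : HilbertBasis ι₂ ℝ H₂) : HilbertBasis (ι₁ × ι₂) ℝ H :=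
  HilbertBasis.mk (tensorBasis_orthonormal P b₁ b₂) (tensorBasis_dense P b₁ b₂)

lemma tensorBasis_apply (P : HilbertTensorProduct H₁ H₂ H)
    (b₁ : HilbertBasis ι₁ ℝ H₁) (b₂ : HilbertBasis ι₂ ℝ H₂) (p : ι₁ × ι₂) :
    tensorBasis P b₁ b₂ p = P.tmul (b₁ p.1) (b₂ p.2) := by
  have h : ⇑(tensorBasis P b₁ b₂) = tensorBasisFun P b₁ b₂ := HilbertBasis.coe_mk _ _
  rw [h]
  rfl

lemma shs_otimes (P : HilbertTensorProduct H₁ H₂ H)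
    (b₁ : HilbertBasis ι₁ ℝ H₁) (b₂ : HilbertBasis ι₂ ℝ H₂)
    (C₁ : H₁ →L[ℝ] H₁) (C₂ : H₂ →L[ℝ] H₂) :
    shs (tensorBasis P b₁ b₂) (P.otimes C₁ C₂) = shs b₁ C₁ * shs b₂ C₂ := by
  unfold shs
  calc ∑' p : ι₁ × ι₂, ENNReal.ofReal (‖P.otimes C₁ C₂ (tensorBasis P b₁ b₂ p)‖ ^ 2)
      = ∑' p : ι₁ × ι₂,
          ENNReal.ofReal (‖C₁ (b₁ p.1)‖ ^ 2) * ENNReal.ofReal (‖C₂ (b₂ p.2)‖ ^ 2) := by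
        refine tsum_congr fun p => ?_
        rw [tensorBasis_apply, P.otimes_tmul, P.norm_tmul, mul_pow,
          ENNReal.ofReal_mul (sq_nonneg _)]
    _ = ∑' i, ∑' j, ENNReal.ofReal (‖C₁ (b₁ i)‖ ^ 2) * ENNReal.ofReal (‖C₂ (b₂ j)‖ ^ 2) :=
        ENNReal.tsum_prod
          (f := fun i j => ENNReal.ofReal (‖C₁ (b₁ i)‖ ^ 2) * ENNReal.ofReal (‖C₂ (b₂ j)‖ ^ 2))
    _ = ∑' i, ENNReal.ofReal (‖C₁ (b₁ i)‖ ^ 2) * ∑' j, ENNReal.ofReal (‖C₂ (b₂ j)‖ ^ 2) :=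
        tsum_congr fun i => ENNReal.tsum_mul_left
    _ = _ := ENNReal.tsum_mul_right

lemma otimes_isHS (b : HilbertBasis κ ℝ H) (P : HilbertTensorProduct H₁ H₂ H)
    (b₁ : HilbertBasis ι₁ ℝ H₁) (b₂ : HilbertBasis ι₂ ℝ H₂)
    {C₁ : H₁ →L[ℝ] H₁} {C₂ : H₂ →L[ℝ] H₂} (h₁ : IsHS b₁ C₁) (h₂ : IsHS b₂ C₂) :
    IsHS b (P.otimes C₁ C₂) := by
  rw [isHS_iff_shs_ne_top, shs_basis_indep b (tensorBasis P b₁ b₂), shs_otimes]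
  exact ENNReal.mul_ne_top ((isHS_iff_shs_ne_top _ _).mp h₁) ((isHS_iff_shs_ne_top _ _).mp h₂)

lemma hsInner_otimes_self (b : HilbertBasis κ ℝ H) (P : HilbertTensorProduct H₁ H₂ H)
    (b₁ : HilbertBasis ι₁ ℝ H₁) (b₂ : HilbertBasis ι₂ ℝ H₂)
    (C₁ : H₁ →L[ℝ] H₁) (C₂ : H₂ →L[ℝ] H₂) :
    hsInner b (P.otimes C₁ C₂) (P.otimes C₁ C₂) = hsInner b₁ C₁ C₁ * hsInner b₂ C₂ C₂ := by
  rw [hsInner_self_eq, hsInner_self_eq, hsInner_self_eq,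
    ← shs_toReal, ← shs_toReal, ← shs_toReal,
    shs_basis_indep b (tensorBasis P b₁ b₂), shs_otimes, ENNReal.toReal_mul]

lemma quad_min {t c s d X : ℝ} (ht : 0 < t) (hq : 0 ≤ t * (t * s) - 2 * (t * c) + d) :
    X - 2 * (t⁻¹ * d) + t * (t⁻¹ * (t⁻¹ * d)) ≤ X - 2 * c + t * s := by
  have h2 : 0 ≤ t⁻¹ := inv_nonneg.2 ht.le
  have h3 : 0 ≤ t⁻¹ * (t * (t * s) - 2 * (t * c) + d) := mul_nonneg h2 hq
  have h4 : t⁻¹ * (t * (t * s) - 2 * (t * c) + d) = t * s - 2 * c + t⁻¹ * d := by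
    field_simp
  have h5 : t * (t⁻¹ * (t⁻¹ * d)) = t⁻¹ * d := by
    field_simp
  rw [h4] at h3
  rw [h5]
  linarith

end TensorAux

/-- for fixed `C ∈ S₂(H₁ ⊗ H₂)` and nonzero `C₁ ∈ S₂(H₁)`, over all
`C₂ ∈ S₂(H₂)` the distance `‖C − C₁ ⊗̃ C₂‖₂` is minimized at `C̃₂ = T₁(C, C₁)/‖C₁‖₂²`. -/
theorem stmt7 (P : HilbertTensorProduct H₁ H₂ H)
    (b₁ : HilbertBasis ι₁ ℝ H₁) (b₂ : HilbertBasis ι₂ ℝ H₂) (b : HilbertBasis κ ℝ H)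
    (T₁ : (H →L[ℝ] H) → (H₁ →L[ℝ] H₁) → (H₂ →L[ℝ] H₂))
    (hT₁ : IsT1 P b₁ b₂ b T₁)
    (C : H →L[ℝ] H) (C₁ : H₁ →L[ℝ] H₁) (hC : IsHS b C) (hC₁ : IsHS b₁ C₁)
    (hC₁ne : C₁ ≠ 0) :
    ∀ C₂ : H₂ →L[ℝ] H₂, IsHS b₂ C₂ →
      hsNorm b (C - P.otimes C₁ C₂) ^ 2 ≥
        hsNorm b (C - P.otimes C₁ ((hsNorm b₁ C₁ ^ 2)⁻¹ • T₁ C C₁)) ^ 2 := by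
  intro C₂ hC₂
  obtain ⟨hT₁HS, hT₁dual⟩ := hT₁
  have hDHS : IsHS b₂ (T₁ C C₁) := hT₁HS C C₁ hC hC₁
  have htpos : 0 < hsInner b₁ C₁ C₁ := hsInner_self_pos hC₁ hC₁ne
  have key : ∀ B : H₂ →L[ℝ] H₂, IsHS b₂ B →
      hsNorm b (C - P.otimes C₁ B) ^ 2
        = hsInner b C C - 2 * hsInner b₂ B (T₁ C C₁)
            + hsInner b₁ C₁ C₁ * hsInner b₂ B B := by
    intro B hB
    have hXB : IsHS b (P.otimes C₁ B) := otimes_isHS b P b₁ b₂ hC₁ hB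
    rw [hsNorm_sq, hsInner_sub_sub b hC hXB, hsInner_otimes_self b P b₁ b₂ C₁ B,
      hT₁dual C C₁ B hC hC₁ hB]
  have hC₂t : IsHS b₂ ((hsNorm b₁ C₁ ^ 2)⁻¹ • T₁ C C₁) := IsHS.smul hDHS _
  rw [ge_iff_le, key C₂ hC₂, key ((hsNorm b₁ C₁ ^ 2)⁻¹ • T₁ C C₁) hC₂t, hsNorm_sq b₁ C₁]
  have e1 : hsInner b₂ ((hsInner b₁ C₁ C₁)⁻¹ • T₁ C C₁) (T₁ C C₁)
      = (hsInner b₁ C₁ C₁)⁻¹ * hsInner b₂ (T₁ C C₁) (T₁ C C₁) :=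
    hsInner_smul_left _ _ _ _
  have e2 : hsInner b₂ ((hsInner b₁ C₁ C₁)⁻¹ • T₁ C C₁) ((hsInner b₁ C₁ C₁)⁻¹ • T₁ C C₁)
      = (hsInner b₁ C₁ C₁)⁻¹ * ((hsInner b₁ C₁ C₁)⁻¹
          * hsInner b₂ (T₁ C C₁) (T₁ C C₁)) := by
    rw [hsInner_smul_left b₂ (T₁ C C₁) ((hsInner b₁ C₁ C₁)⁻¹ • T₁ C C₁),
      hsInner_comm b₂ (T₁ C C₁) ((hsInner b₁ C₁ C₁)⁻¹ • T₁ C C₁),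
      hsInner_smul_left b₂ (T₁ C C₁) (T₁ C C₁)]
  rw [e1, e2]
  have a1 : hsInner b₂ (hsInner b₁ C₁ C₁ • C₂) (hsInner b₁ C₁ C₁ • C₂)
      = hsInner b₁ C₁ C₁ * (hsInner b₁ C₁ C₁ * hsInner b₂ C₂ C₂) := by
    rw [hsInner_smul_left b₂ C₂ (hsInner b₁ C₁ C₁ • C₂),
      hsInner_comm b₂ C₂ (hsInner b₁ C₁ C₁ • C₂),
      hsInner_smul_left b₂ C₂ C₂]
  have a2 : hsInner b₂ (hsInner b₁ C₁ C₁ • C₂) (T₁ C C₁)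
      = hsInner b₁ C₁ C₁ * hsInner b₂ C₂ (T₁ C C₁) :=
    hsInner_smul_left _ _ _ _
  have hquad : 0 ≤ hsInner b₂ (hsInner b₁ C₁ C₁ • C₂ - T₁ C C₁)
      (hsInner b₁ C₁ C₁ • C₂ - T₁ C C₁) := hsInner_self_nonneg _ _
  have hexp : hsInner b₂ (hsInner b₁ C₁ C₁ • C₂ - T₁ C C₁)
        (hsInner b₁ C₁ C₁ • C₂ - T₁ C C₁)
      = hsInner b₁ C₁ C₁ * (hsInner b₁ C₁ C₁ * hsInner b₂ C₂ C₂)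
          - 2 * (hsInner b₁ C₁ C₁ * hsInner b₂ C₂ (T₁ C C₁))
          + hsInner b₂ (T₁ C C₁) (T₁ C C₁) := by
    rw [hsInner_sub_sub b₂ (IsHS.smul hC₂ _) hDHS, a1, a2]
  rw [hexp] at hquad
  exact quad_min htpos hquad
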